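/- Let r,s,t be integers with 0 ≤ r ≤ s < t, and let i,j,k ∈ ℤ with i+j+k even. Then for all integers x and u: k − j + 1 − x + 2·⌊((t+s)·u + (r−s)·x)/(t−s)⌋ = 1 + (x−i) + 2·⌊(−(t+s)·((k+i+j)/2 − u) − (t−r)·(x−i) + r·i + s·j + t·k)/(t−s)⌋. (This identifies the horizontal-edge position function w(x,u) of the (r,s,t)-slanted dimer graph with the pinecone function L(ñ,R,C) of Bousquet-Mélou–Propp–West with parameters ĩ = t+s, j̃ = t−s, l̃ = t−r, m̃ = 2t, ñ = r·i + s·j + t·k + 2t, evaluated at R = x−i and C = (k+i+j)/2 − u.) -/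
import Mathlib


/-- Theorem 2.10, case `x ≥ i` identification: the horizontal-edge position
function `w(x,u)` of the (r,s,t)-slanted dimer graph coincides with the pinecone function
`L(ñ,R,C)` of Bousquet-Mélou–Propp–West with `ĩ = t+s`, `j̃ = t−s`, `l̃ = t−r`, `m̃ = 2t`,
`ñ = r·i + s·j + t·k + 2t`, evaluated at `R = x−i`, `C = (k+i+j)/2 − u`. -/
theorem w_equals_pinecone_L
    (r s t : ℤ) (hr0 : 0 ≤ r) (hrs : r ≤ s) (hst : s < t)
    (i j k : ℤ) (hpar : Even (i + j + k)) :
    ∀ x u : ℤ,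
      k - j + 1 - x
          + 2 * ⌊(((t + s) * u + (r - s) * x : ℤ) : ℚ) / ((t - s : ℤ) : ℚ)⌋
        = 1 + (x - i)
          + 2 * ⌊((-(t + s) * ((k + i + j) / 2 - u) - (t - r) * (x - i)
              + r * i + s * j + t * k : ℤ) : ℚ) / ((t - s : ℤ) : ℚ)⌋ := by
  obtain ⟨m, hm⟩ := hpar
  intro x u
  have hd : (t - s : ℤ) ≠ 0 := by omega
  have hdq : ((t - s : ℤ) : ℚ) ≠ 0 := by exact_mod_cast hd
  have hdiv : (k + i + j) / 2 = m := by omega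
  rw [hdiv]
  have hkey : (-(t + s) * (m - u) - (t - r) * (x - i) + r * i + s * j + t * k : ℤ)
      = ((t + s) * u + (r - s) * x) + (t - s) * (m - j - x) := by nlinarith [hm]
  rw [hkey]
  have hsplit : ((((t + s) * u + (r - s) * x) + (t - s) * (m - j - x) : ℤ) : ℚ)
        / ((t - s : ℤ) : ℚ)
      = (((t + s) * u + (r - s) * x : ℤ) : ℚ) / ((t - s : ℤ) : ℚ)
        + ((m - j - x : ℤ) : ℚ) := by
    rw [Int.cast_add, add_div, Int.cast_mul, mul_div_cancel_left₀ _ hdq]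
  rw [hsplit, Int.floor_add_intCast]
  omega
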